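/- arXiv:1510.08175 — 3 statements merged into one kernel-verified Lean document; each statement's English description precedes it below -/
import Mathlib

section
/- (Theorem 4, item 1) Suppose eTRS satisfies the Slater condition and (t*, λ*) with λ* ≥ 0 maximizes k(t,λ) := (Δ+1)λmin(D(t,λ)) − t − λc over t ∈ ℝ, λ ≥ 0. Assume λmin(D(t*,λ*)) < λmin(A), and let y = (y0, z) ∈ ℝ × ℝⁿ be a unit-norm eigenvector of D(t*,λ*) corresponding to λmin(D(t*,λ*)). Then y0 ≠ 0, strong duality holds for eTRS (p* = d*), and x* := z / y0 is a global optimal solution of eTRS. -/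
open Matrix

/-- The smallest eigenvalue of a real (symmetric) matrix. -/
noncomputable def lambdaMin {ι : Type} [Fintype ι] (M : Matrix ι ι ℝ) : ℝ :=
  sInf {μ : ℝ | ∃ v : ι → ℝ, v ≠ 0 ∧ M.mulVec v = μ • v}

/-- The multiplicity of the smallest eigenvalue: the dimension of Null(M - λmin(M)·I). -/
noncomputable def eigMult {ι : Type} [Fintype ι] [DecidableEq ι] (M : Matrix ι ι ℝ) : ℕ :=
  Module.finrank ℝ (LinearMap.ker (M - lambdaMin M • (1 : Matrix ι ι ℝ)).mulVecLin)

/-- The bordered matrix D(t) = [[t, -aᵀ],[-a, A]]. -/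
noncomputable def borderD {n : ℕ} (A : Matrix (Fin n) (Fin n) ℝ) (a : Fin n → ℝ) (t : ℝ) :
    Matrix (Unit ⊕ Fin n) (Unit ⊕ Fin n) ℝ :=
  Matrix.fromBlocks (Matrix.of fun (_ : Unit) (_ : Unit) => t)
    (Matrix.of fun (_ : Unit) (j : Fin n) => -a j)
    (Matrix.of fun (i : Fin n) (_ : Unit) => -a i) A

/-- The bordered matrix D(t,λ) = [[t, (-a + (λ/2)b)ᵀ],[-a + (λ/2)b, A]]. -/
noncomputable def borderD2 {n : ℕ} (A : Matrix (Fin n) (Fin n) ℝ) (a b : Fin n → ℝ)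
    (t l : ℝ) : Matrix (Unit ⊕ Fin n) (Unit ⊕ Fin n) ℝ :=
  borderD A (fun j => a j - (l / 2) * b j) t

/-- The objective xᵀAx - 2aᵀx. -/
noncomputable def objQ {n : ℕ} (A : Matrix (Fin n) (Fin n) ℝ) (a : Fin n → ℝ)
    (x : Fin n → ℝ) : ℝ :=
  x ⬝ᵥ A.mulVec x - 2 * (a ⬝ᵥ x)

/-- The optimal value p* of eTRS. -/
noncomputable def pstar {n : ℕ} (A : Matrix (Fin n) (Fin n) ℝ) (a b : Fin n → ℝ)
    (c Δ : ℝ) : ℝ :=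
  sInf {v : ℝ | ∃ x : Fin n → ℝ, x ⬝ᵥ x ≤ Δ ∧ b ⬝ᵥ x ≤ c ∧ v = objQ A a x}

/-- The Lagrangian of eTRS. -/
noncomputable def lagr {n : ℕ} (A : Matrix (Fin n) (Fin n) ℝ) (a b : Fin n → ℝ)
    (c Δ : ℝ) (x : Fin n → ℝ) (l1 l2 : ℝ) : ℝ :=
  objQ A a x + l1 * (x ⬝ᵥ x - Δ) + l2 * (b ⬝ᵥ x - c)

/-- The Lagrangian dual value d* of eTRS:
the supremum over λ1, λ2 ≥ 0 of inf_x of the Lagrangian, encoded as the supremum of all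
values that are lower bounds of the Lagrangian for some admissible multipliers. -/
noncomputable def dstar {n : ℕ} (A : Matrix (Fin n) (Fin n) ℝ) (a b : Fin n → ℝ)
    (c Δ : ℝ) : ℝ :=
  sSup {v : ℝ | ∃ l1 l2 : ℝ, 0 ≤ l1 ∧ 0 ≤ l2 ∧ ∀ x : Fin n → ℝ, v ≤ lagr A a b c Δ x l1 l2}

/-- x is a global optimal solution of eTRS. -/
def isOptimal {n : ℕ} (A : Matrix (Fin n) (Fin n) ℝ) (a b : Fin n → ℝ)
    (c Δ : ℝ) (x : Fin n → ℝ) : Prop :=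
  x ⬝ᵥ x ≤ Δ ∧ b ⬝ᵥ x ≤ c ∧
    ∀ y : Fin n → ℝ, y ⬝ᵥ y ≤ Δ → b ⬝ᵥ y ≤ c → objQ A a x ≤ objQ A a y

/-- The dual objective k(t,λ) = (Δ+1)·λmin(D(t,λ)) - t - λc. -/
noncomputable def ktl {n : ℕ} (A : Matrix (Fin n) (Fin n) ℝ) (a b : Fin n → ℝ)
    (c Δ : ℝ) (t l : ℝ) : ℝ :=
  (Δ + 1) * lambdaMin (borderD2 A a b t l) - t - l * c

section auxlemmas

variable {ι : Type} [Fintype ι] [DecidableEq ι]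

lemma aux_inner_eq_dot (x y : EuclideanSpace ℝ ι) :
    (inner ℝ x y : ℝ) = (WithLp.equiv 2 (ι → ℝ)) x ⬝ᵥ (WithLp.equiv 2 (ι → ℝ)) y := by
  rw [EuclideanSpace.inner_eq_star_dotProduct, dotProduct_comm]; simp

omit [DecidableEq ι] in
lemma aux_transpose_eq {M : Matrix ι ι ℝ} (hM : M.IsHermitian) : Mᵀ = M := by
  have := hM.eq; simpa using this

omit [DecidableEq ι] in
lemma aux_dot_mulVec_symm {M : Matrix ι ι ℝ} (hM : M.IsHermitian) (v w : ι → ℝ) :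
    v ⬝ᵥ M.mulVec w = (M.mulVec v) ⬝ᵥ w := by
  rw [Matrix.dotProduct_mulVec, ← Matrix.mulVec_transpose, aux_transpose_eq hM]

lemma aux_dot_mulVec_expand {M : Matrix ι ι ℝ} (hM : M.IsHermitian) (v : ι → ℝ) :
    v ⬝ᵥ M.mulVec v
      = ∑ i, hM.eigenvalues i * (hM.eigenvectorBasis.repr ((WithLp.equiv 2 (ι → ℝ)).symm v) i)^2 := by
  set e := WithLp.equiv 2 (ι → ℝ)
  set b := hM.eigenvectorBasis
  have h1 : v ⬝ᵥ M.mulVec v = (inner ℝ (e.symm v) (e.symm (M.mulVec v)) : ℝ) := by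
    rw [aux_inner_eq_dot]; simp [e]
  rw [h1, ← b.repr.inner_map_map, aux_inner_eq_dot]
  have hrep : ∀ i, b.repr (e.symm (M.mulVec v)) i = hM.eigenvalues i * b.repr (e.symm v) i := by
    intro i
    rw [OrthonormalBasis.repr_apply_apply, aux_inner_eq_dot]
    have h2 : e (b i) ⬝ᵥ (M.mulVec v) = (M.mulVec (e (b i))) ⬝ᵥ v := aux_dot_mulVec_symm hM _ _
    have h3 := hM.mulVec_eigenvectorBasis i
    simp only [e, Equiv.apply_symm_apply]
    rw [h2, show e (b i) = (hM.eigenvectorBasis i).ofLp from rfl, h3, smul_dotProduct]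
    rw [OrthonormalBasis.repr_apply_apply, aux_inner_eq_dot]
    rfl
  simp only [dotProduct, WithLp.equiv_apply]
  refine Finset.sum_congr rfl fun i _ => ?_
  rw [hrep i]; ring

lemma aux_dot_self_expand {M : Matrix ι ι ℝ} (hM : M.IsHermitian) (v : ι → ℝ) :
    v ⬝ᵥ v = ∑ i, (hM.eigenvectorBasis.repr ((WithLp.equiv 2 (ι → ℝ)).symm v) i)^2 := by
  set e := WithLp.equiv 2 (ι → ℝ)
  set b := hM.eigenvectorBasis
  have h1 : v ⬝ᵥ v = (inner ℝ (e.symm v) (e.symm v) : ℝ) := by rw [aux_inner_eq_dot]; simp [e]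
  rw [h1, ← b.repr.inner_map_map, aux_inner_eq_dot]
  simp [dotProduct, sq]

omit [DecidableEq ι] in
lemma aux_dot_self_nonneg (v : ι → ℝ) : 0 ≤ v ⬝ᵥ v :=
  Finset.sum_nonneg fun i _ => mul_self_nonneg _

omit [DecidableEq ι] in
lemma aux_dot_self_pos {v : ι → ℝ} (hv : v ≠ 0) : 0 < v ⬝ᵥ v := by
  have h0 : 0 ≤ v ⬝ᵥ v := Finset.sum_nonneg fun i _ => mul_self_nonneg _
  rcases h0.lt_or_eq with h | h
  · exact h
  · exfalso; apply hv; funext i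
    have := Finset.sum_eq_zero_iff_of_nonneg
      (fun i (_ : i ∈ Finset.univ) => mul_self_nonneg (v i)) |>.mp h.symm i (Finset.mem_univ i)
    show v i = 0
    nlinarith [this]

lemma aux_emin_rayleigh {M : Matrix ι ι ℝ} (hM : M.IsHermitian) (i0 : ι)
    (hmin : ∀ i, hM.eigenvalues i0 ≤ hM.eigenvalues i) (v : ι → ℝ) :
    hM.eigenvalues i0 * (v ⬝ᵥ v) ≤ v ⬝ᵥ M.mulVec v := by
  rw [aux_dot_mulVec_expand hM, aux_dot_self_expand hM, Finset.mul_sum]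
  exact Finset.sum_le_sum fun i _ => mul_le_mul_of_nonneg_right (hmin i) (sq_nonneg _)

lemma lambdaMin_spec [Nonempty ι] {M : Matrix ι ι ℝ} (hM : M.IsHermitian) :
    (∃ v : ι → ℝ, v ≠ 0 ∧ M.mulVec v = lambdaMin M • v) ∧
    (∀ (μ : ℝ) (v : ι → ℝ), v ≠ 0 → M.mulVec v = μ • v → lambdaMin M ≤ μ) ∧
    (∀ v : ι → ℝ, lambdaMin M * (v ⬝ᵥ v) ≤ v ⬝ᵥ M.mulVec v) := by
  obtain ⟨i0, -, hmin⟩ := Finset.exists_min_image Finset.univ hM.eigenvalues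
    ⟨Classical.arbitrary ι, Finset.mem_univ _⟩
  have hmin' : ∀ i, hM.eigenvalues i0 ≤ hM.eigenvalues i := fun i => hmin i (Finset.mem_univ i)
  set S := {μ : ℝ | ∃ v : ι → ℝ, v ≠ 0 ∧ M.mulVec v = μ • v} with hS
  have hmem : hM.eigenvalues i0 ∈ S := by
    refine ⟨(WithLp.equiv 2 (ι → ℝ)) (hM.eigenvectorBasis i0), ?_, hM.mulVec_eigenvectorBasis i0⟩
    have := hM.eigenvectorBasis.orthonormal.1 i0
    intro h
    have h2 : hM.eigenvectorBasis i0 = 0 := by ext j; exact congrFun h j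
    rw [h2] at this; simp at this
  have hlb : ∀ μ ∈ S, hM.eigenvalues i0 ≤ μ := by
    rintro μ ⟨v, hv, hev⟩
    have h1 : v ⬝ᵥ M.mulVec v = μ * (v ⬝ᵥ v) := by rw [hev, dotProduct_smul]; rfl
    have h2 := aux_emin_rayleigh hM i0 hmin' v
    have h3 := aux_dot_self_pos hv
    nlinarith
  have heq : lambdaMin M = hM.eigenvalues i0 :=
    le_antisymm (csInf_le ⟨hM.eigenvalues i0, hlb⟩ hmem) (le_csInf ⟨_, hmem⟩ hlb)
  refine ⟨?_, ?_, ?_⟩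
  · rw [heq]; exact hmem
  · intro μ v hv hev; rw [heq]; exact hlb μ ⟨v, hv, hev⟩
  · intro v; rw [heq]; exact aux_emin_rayleigh hM i0 hmin' v

lemma lambdaMin_exists_unit [Nonempty ι] {M : Matrix ι ι ℝ} (hM : M.IsHermitian) :
    ∃ u : ι → ℝ, u ⬝ᵥ u = 1 ∧ M.mulVec u = lambdaMin M • u := by
  obtain ⟨v, hv, hev⟩ := (lambdaMin_spec hM).1
  have hpos := aux_dot_self_pos hv
  set r := Real.sqrt (v ⬝ᵥ v) with hr
  have hrpos : 0 < r := Real.sqrt_pos.mpr hpos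
  have hr2 : r * r = v ⬝ᵥ v := Real.mul_self_sqrt hpos.le
  refine ⟨r⁻¹ • v, ?_, ?_⟩
  · rw [smul_dotProduct, dotProduct_smul, smul_eq_mul, smul_eq_mul, ← hr2]
    field_simp
  · rw [Matrix.mulVec_smul, hev, smul_comm]

end auxlemmas

section borderlemmas

variable {n : ℕ}

lemma dot_sum_split (u w : Unit ⊕ Fin n → ℝ) :
    u ⬝ᵥ w = u (Sum.inl ()) * w (Sum.inl ())
      + (fun i => u (Sum.inr i)) ⬝ᵥ (fun i => w (Sum.inr i)) := by
  simp [dotProduct, Fintype.sum_sum_type]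

lemma borderD_mulVec_inl (A : Matrix (Fin n) (Fin n) ℝ) (a : Fin n → ℝ) (t : ℝ)
    (u : Unit ⊕ Fin n → ℝ) :
    (borderD A a t).mulVec u (Sum.inl ())
      = t * u (Sum.inl ()) - a ⬝ᵥ (fun i => u (Sum.inr i)) := by
  simp [borderD, Matrix.mulVec, dotProduct, Fintype.sum_sum_type, neg_mul,
    Finset.sum_neg_distrib, sub_eq_add_neg]

lemma borderD_mulVec_inr (A : Matrix (Fin n) (Fin n) ℝ) (a : Fin n → ℝ) (t : ℝ)
    (u : Unit ⊕ Fin n → ℝ) (i : Fin n) :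
    (borderD A a t).mulVec u (Sum.inr i)
      = -(a i) * u (Sum.inl ()) + A.mulVec (fun j => u (Sum.inr j)) i := by
  simp [borderD, Matrix.mulVec, dotProduct, Fintype.sum_sum_type]

lemma borderD_quad (A : Matrix (Fin n) (Fin n) ℝ) (a : Fin n → ℝ) (t : ℝ)
    (u : Unit ⊕ Fin n → ℝ) :
    u ⬝ᵥ (borderD A a t).mulVec u
      = t * (u (Sum.inl ()))^2 - 2 * u (Sum.inl ()) * (a ⬝ᵥ (fun i => u (Sum.inr i)))
        + (fun i => u (Sum.inr i)) ⬝ᵥ A.mulVec (fun i => u (Sum.inr i)) := by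
  rw [dot_sum_split, borderD_mulVec_inl]
  have h2 : (fun i => u (Sum.inr i)) ⬝ᵥ (fun i => (borderD A a t).mulVec u (Sum.inr i))
      = -(u (Sum.inl ())) * (a ⬝ᵥ (fun i => u (Sum.inr i)))
        + (fun i => u (Sum.inr i)) ⬝ᵥ A.mulVec (fun i => u (Sum.inr i)) := by
    simp only [borderD_mulVec_inr, dotProduct]
    rw [Finset.mul_sum, ← Finset.sum_add_distrib]
    apply Finset.sum_congr rfl; intro i _; ring
  rw [h2]; ring

lemma borderD_isHermitian {A : Matrix (Fin n) (Fin n) ℝ} (hA : A.IsHermitian)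
    (a : Fin n → ℝ) (t : ℝ) : (borderD A a t).IsHermitian := by
  have hAs : ∀ i j, A j i = A i j := by
    intro i j
    have := congrFun (congrFun hA.eq i) j
    simpa using this
  show (borderD A a t)ᴴ = borderD A a t
  ext i j
  rcases i with i | i <;> rcases j with j | j <;>
    simp [borderD, Matrix.conjTranspose_apply, Matrix.fromBlocks, hAs]

lemma borderD2_isHermitian {A : Matrix (Fin n) (Fin n) ℝ} (hA : A.IsHermitian)
    (a b : Fin n → ℝ) (t l : ℝ) : (borderD2 A a b t l).IsHermitian :=
  borderD_isHermitian hA _ t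

lemma nonpos_of_small (θ C : ℝ) (hC : 0 ≤ C) (δ : ℝ) (hδ : 0 < δ)
    (h : ∀ s : ℝ, 0 < s → s < δ → θ ≤ C * s) : θ ≤ 0 := by
  by_contra hθ
  push_neg at hθ
  set s := min (δ/2) (θ / (2*(C+1))) with hs
  have hs1 : 0 < s := lt_min (by linarith) (by positivity)
  have hs2 : s < δ := lt_of_le_of_lt (min_le_left _ _) (by linarith)
  have h3 := h s hs1 hs2
  have h4 : s ≤ θ / (2*(C+1)) := min_le_right _ _
  have h5 : C * s ≤ C * (θ / (2*(C+1))) := mul_le_mul_of_nonneg_left h4 hC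
  have h6 : C * (θ / (2*(C+1))) < θ := by
    have he : C * (θ / (2*(C+1))) = (C*θ)/(2*(C+1)) := by ring
    rw [he, div_lt_iff₀ (by positivity)]
    nlinarith
  linarith

end borderlemmas

set_option maxHeartbeats 2000000 in
/-- Theorem 4, item 1. -/
theorem stmt10 {n : ℕ} (hn : 1 ≤ n) (A : Matrix (Fin n) (Fin n) ℝ) (hA : A.IsHermitian)
    (hnpd : ¬ A.PosDef) (a b : Fin n → ℝ) (c Δ : ℝ) (hΔ : 0 < Δ)
    (hslater : ∃ x : Fin n → ℝ, x ⬝ᵥ x < Δ ∧ b ⬝ᵥ x < c)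
    (ts ls : ℝ) (hls : 0 ≤ ls)
    (hmax : ∀ t l : ℝ, 0 ≤ l → ktl A a b c Δ t l ≤ ktl A a b c Δ ts ls)
    (hlt : lambdaMin (borderD2 A a b ts ls) < lambdaMin A)
    (y : Unit ⊕ Fin n → ℝ) (hy1 : y ⬝ᵥ y = 1)
    (hy : (borderD2 A a b ts ls).mulVec y = lambdaMin (borderD2 A a b ts ls) • y) :
    y (Sum.inl ()) ≠ 0 ∧ pstar A a b c Δ = dstar A a b c Δ ∧
    isOptimal A a b c Δ (fun i => y (Sum.inr i) / y (Sum.inl ())) := by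
  classical
  have hne : Nonempty (Fin n) := ⟨⟨0, hn⟩⟩
  have hD : (borderD2 A a b ts ls).IsHermitian := borderD2_isHermitian hA a b ts ls
  obtain ⟨-, hAle, hAray⟩ := lambdaMin_spec hA
  set μ := lambdaMin (borderD2 A a b ts ls) with hμ_def
  set ν := lambdaMin A with hν_def
  set D := borderD2 A a b ts ls with hD_def
  set y0 := y (Sum.inl ()) with hy0_def
  set z : Fin n → ℝ := fun i => y (Sum.inr i) with hz_def
  set a' : Fin n → ℝ := fun j => a j - ls / 2 * b j with ha'_def
  have hDa : D = borderD A a' ts := rfl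
  -- ν ≤ 0
  have hν0 : ν ≤ 0 := by
    by_contra h; push_neg at h
    apply hnpd
    refine Matrix.PosDef.of_dotProduct_mulVec_pos hA (fun x hx => ?_)
    have h1 := hAray x
    have h2 := aux_dot_self_pos hx
    have hstar : star x = x := by
      funext i; simp
    rw [hstar]
    nlinarith
  have hμν : μ < ν := hlt
  have hμ0 : μ < 0 := lt_of_lt_of_le hμν hν0
  have hg : 0 < ν - μ := by linarith
  -- split of y's norm
  have hysplit : y0 * y0 + z ⬝ᵥ z = 1 := by
    have := dot_sum_split y y; rw [hy1] at this; linarith [this]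
  have hy0sq_le : y0^2 ≤ 1 := by
    nlinarith [hysplit, aux_dot_self_nonneg z]
  -- y0 ≠ 0
  have hy0 : y0 ≠ 0 := by
    intro h0
    have hzz : z ⬝ᵥ z = 1 := by rw [h0] at hysplit; linarith
    have hznz : z ≠ 0 := by
      intro h; rw [h] at hzz; simp [zero_dotProduct] at hzz
    have hev : A.mulVec z = μ • z := by
      funext i
      have h1 := congrFun hy (Sum.inr i)
      rw [hDa, borderD_mulVec_inr] at h1
      have h0' : y (Sum.inl ()) = 0 := h0
      rw [h0'] at h1
      simpa [hz_def] using h1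
    have := hAle μ z hznz hev
    linarith
  have hy0sq : 0 < y0^2 := by positivity
  -- gap lemma
  have hgap : ∀ w : Unit ⊕ Fin n → ℝ, w ⬝ᵥ y = 0 → ν * (w ⬝ᵥ w) ≤ w ⬝ᵥ D.mulVec w := by
    intro w hwy
    set v : Unit ⊕ Fin n → ℝ := w (Sum.inl ()) • y - y0 • w with hv_def
    have hvinl : v (Sum.inl ()) = 0 := by simp [hv_def, hy0_def]; ring
    have hDv : D.mulVec v = (w (Sum.inl ()) * μ) • y - y0 • D.mulVec w := by
      rw [hv_def, Matrix.mulVec_sub, Matrix.mulVec_smul, Matrix.mulVec_smul, hy, smul_smul]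
    have hyw0 : y ⬝ᵥ w = 0 := by rw [dotProduct_comm]; exact hwy
    have hyDw : y ⬝ᵥ D.mulVec w = 0 := by
      rw [aux_dot_mulVec_symm hD, hy, smul_dotProduct, smul_eq_mul, hyw0, mul_zero]
    have hyw : y ⬝ᵥ w = 0 := by rw [dotProduct_comm]; exact hwy
    have hvDv : v ⬝ᵥ D.mulVec v = (w (Sum.inl ()))^2 * μ + y0^2 * (w ⬝ᵥ D.mulVec w) := by
      rw [hv_def, hDv]
      simp only [sub_dotProduct, dotProduct_sub, smul_dotProduct,
        dotProduct_smul, smul_eq_mul, hy1, hyw, hwy, hyDw]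
      ring
    have hvv : v ⬝ᵥ v = (w (Sum.inl ()))^2 + y0^2 * (w ⬝ᵥ w) := by
      rw [hv_def]
      simp only [sub_dotProduct, dotProduct_sub, smul_dotProduct,
        dotProduct_smul, smul_eq_mul, hy1, hyw, hwy]
      ring
    have hquad : v ⬝ᵥ D.mulVec v = (fun i => v (Sum.inr i)) ⬝ᵥ A.mulVec (fun i => v (Sum.inr i)) := by
      rw [hDa, borderD_quad, hvinl]; ring
    have hvsplit : v ⬝ᵥ v = (fun i => v (Sum.inr i)) ⬝ᵥ (fun i => v (Sum.inr i)) := by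
      rw [dot_sum_split v v, hvinl]; ring
    have hray := hAray (fun i => v (Sum.inr i))
    rw [← hvsplit, ← hquad, hvv, hvDv] at hray
    have hfac : y0^2 * (ν * (w ⬝ᵥ w)) ≤ y0^2 * (w ⬝ᵥ D.mulVec w) := by nlinarith [sq_nonneg (w (Sum.inl ()))]
    exact le_of_mul_le_mul_left hfac hy0sq
  -- generic perturbation lower bound
  have hgen : ∀ (q : (Unit ⊕ Fin n → ℝ) → ℝ) (K : ℝ), 0 ≤ K →
      (∀ (α : ℝ) (w : Unit ⊕ Fin n → ℝ), w ⬝ᵥ y = 0 → α^2 + w ⬝ᵥ w = 1 →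
        |q (α • y + w) - q y| ≤ K * Real.sqrt (w ⬝ᵥ w)) →
      ∀ (s : ℝ) (P : Matrix (Unit ⊕ Fin n) (Unit ⊕ Fin n) ℝ), P.IsHermitian →
      (∀ v : Unit ⊕ Fin n → ℝ, v ⬝ᵥ P.mulVec v = v ⬝ᵥ D.mulVec v + s * q v) →
      μ + s * q y - (K^2/(4*(ν-μ)))*s^2 ≤ lambdaMin P := by
    intro q K hK hqb s P hP hPq
    obtain ⟨u, hu1, huev⟩ := lambdaMin_exists_unit hP
    have hval : u ⬝ᵥ P.mulVec u = lambdaMin P := by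
      rw [huev, dotProduct_smul, smul_eq_mul, hu1, mul_one]
    set α := u ⬝ᵥ y with hα_def
    set w := u - α • y with hw_def
    have hwy : w ⬝ᵥ y = 0 := by
      rw [hw_def, sub_dotProduct, smul_dotProduct, hy1]; simp [hα_def]
    have huw : u = α • y + w := by rw [hw_def]; abel
    have hyw : y ⬝ᵥ w = 0 := by rw [dotProduct_comm]; exact hwy
    have hsum : α^2 + w ⬝ᵥ w = 1 := by
      have h1 : u ⬝ᵥ u = 1 := hu1
      rw [huw] at h1
      simp only [add_dotProduct, dotProduct_add, smul_dotProduct,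
        dotProduct_smul, smul_eq_mul, hy1, hyw, hwy] at h1
      nlinarith [h1]
    have hwwnn : 0 ≤ w ⬝ᵥ w := by
      rcases eq_or_ne w 0 with h | h
      · rw [h]; simp
      · exact (aux_dot_self_pos h).le
    have hww1 : w ⬝ᵥ w ≤ 1 := by nlinarith [sq_nonneg α]
    have hDpart : u ⬝ᵥ D.mulVec u = α^2*μ + w ⬝ᵥ D.mulVec w := by
      have hyDw : y ⬝ᵥ D.mulVec w = 0 := by
        rw [aux_dot_mulVec_symm hD, hy, smul_dotProduct, smul_eq_mul, hyw, mul_zero]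
      rw [huw, Matrix.mulVec_add, Matrix.mulVec_smul, hy]
      simp only [add_dotProduct, dotProduct_add, smul_dotProduct,
        dotProduct_smul, smul_eq_mul, hy1, hyw, hwy, hyDw]
      ring
    have hgapw := hgap w hwy
    have key : α^2*μ + ν*(w ⬝ᵥ w) + s * q u ≤ lambdaMin P := by
      rw [← hval, hPq u, hDpart]; linarith
    set ε := Real.sqrt (w ⬝ᵥ w) with hε_def
    have hε2 : ε^2 = w ⬝ᵥ w := Real.sq_sqrt hwwnn
    have hεnn : 0 ≤ ε := Real.sqrt_nonneg _
    have hqb2 := hqb α w hwy hsum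
    rw [← huw] at hqb2
    have hsqu : s * q y - |s| * (K * ε) ≤ s * q u := by
      have h1 : |s * (q u - q y)| ≤ |s| * (K * ε) := by
        rw [abs_mul]
        exact mul_le_mul_of_nonneg_left hqb2 (abs_nonneg s)
      have h2 := neg_abs_le (s * (q u - q y))
      nlinarith [h1, h2]
    have hkey2 : 0 ≤ (ν-μ)*ε^2 - |s| * (K * ε) + (K^2/(4*(ν-μ)))*s^2 := by
      have h := sq_nonneg (2*(ν-μ)*ε - K * |s|)
      have habs : |s| ^ 2 = s^2 := sq_abs s
      have hdiv : (K^2/(4*(ν-μ)))*s^2 * (4*(ν-μ)) = K^2*s^2 := by field_simp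
      nlinarith [hg, h, habs, hdiv]
    have hid : α^2*μ + ν*(w ⬝ᵥ w) = μ + (ν-μ)*ε^2 := by
      have hww : w ⬝ᵥ w = 1 - α^2 := by linarith
      rw [hε2, hww]; ring
    linarith [key, hsqu, hkey2, hid.symm.le, hid.le]
  -- t-direction
  have hpert_t : ∀ s : ℝ,
      μ + s * y0^2 - (4^2/(4*(ν-μ)))*s^2 ≤ lambdaMin (borderD2 A a b (ts+s) ls) := by
    intro s
    have hbound : ∀ (α : ℝ) (w : Unit ⊕ Fin n → ℝ), w ⬝ᵥ y = 0 → α^2 + w ⬝ᵥ w = 1 →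
        |((α • y + w) (Sum.inl ()))^2 - (y (Sum.inl ()))^2| ≤ 4 * Real.sqrt (w ⬝ᵥ w) := by
      intro α w hwy hsum
      set ε := Real.sqrt (w ⬝ᵥ w) with hε_def
      have hwwnn : 0 ≤ w ⬝ᵥ w := by
        rcases eq_or_ne w 0 with h | h
        · rw [h]; simp
        · exact (aux_dot_self_pos h).le
      have hε2 : ε^2 = w ⬝ᵥ w := Real.sq_sqrt hwwnn
      have hεnn : 0 ≤ ε := Real.sqrt_nonneg _
      have hα2 : α^2 ≤ 1 := by nlinarith
      have hαabs : |α| ≤ 1 := by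
        rw [← Real.sqrt_sq_eq_abs]
        calc Real.sqrt (α^2) ≤ Real.sqrt 1 := Real.sqrt_le_sqrt hα2
        _ = 1 := Real.sqrt_one
      have hy0abs : |y0| ≤ 1 := by
        rw [← Real.sqrt_sq_eq_abs]
        calc Real.sqrt (y0^2) ≤ Real.sqrt 1 := Real.sqrt_le_sqrt hy0sq_le
        _ = 1 := Real.sqrt_one
      set w0 := w (Sum.inl ()) with hw0_def
      have hw0sq : w0^2 ≤ w ⬝ᵥ w := by
        have h1 := dot_sum_split w w
        have h2 : 0 ≤ (fun i => w (Sum.inr i)) ⬝ᵥ (fun i => w (Sum.inr i)) := by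
          rcases eq_or_ne (fun i => w (Sum.inr i)) 0 with h | h
          · rw [h]; simp
          · exact (aux_dot_self_pos h).le
        nlinarith [h1, h2]
      have hw0abs : |w0| ≤ ε := by
        rw [← Real.sqrt_sq_eq_abs]
        calc Real.sqrt (w0^2) ≤ Real.sqrt (w ⬝ᵥ w) := Real.sqrt_le_sqrt hw0sq
        _ = ε := rfl
      have hε1 : ε ≤ 1 := by
        rw [hε_def]
        calc Real.sqrt (w ⬝ᵥ w) ≤ Real.sqrt 1 := Real.sqrt_le_sqrt (by nlinarith)
        _ = 1 := Real.sqrt_one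
      have huinl : (α • y + w) (Sum.inl ()) = α * y0 + w0 := by
        simp [hy0_def, hw0_def]
      have hp : |α * y0| ≤ 1 := by
        rw [abs_mul]
        exact mul_le_one₀ hαabs (abs_nonneg y0) hy0abs
      obtain ⟨hp1, hp2⟩ := abs_le.mp hp
      obtain ⟨hw1, hw2⟩ := abs_le.mp hw0abs
      have hα2e : α^2 = 1 - ε^2 := by rw [hε2]; linarith
      rw [huinl, abs_le]
      constructor
      · nlinarith [mul_nonneg (sub_nonneg.mpr hp2) (sub_nonneg.mpr hw2),
          mul_nonneg (sub_nonneg.mpr (neg_le.mp hp1)) (sub_nonneg.mpr (neg_le.mp hw1)),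
          mul_nonneg (sub_nonneg.mpr (neg_le.mp hp1)) (sub_nonneg.mpr hw2),
          mul_nonneg (sub_nonneg.mpr hp2) (sub_nonneg.mpr (neg_le.mp hw1)),
          mul_nonneg (sub_nonneg.mpr hy0sq_le) (sq_nonneg ε),
          mul_nonneg hεnn (sub_nonneg.mpr hε1), sq_nonneg y0, sq_nonneg w0]
      · nlinarith [mul_nonneg (sub_nonneg.mpr hp2) (sub_nonneg.mpr hw2),
          mul_nonneg (sub_nonneg.mpr (neg_le.mp hp1)) (sub_nonneg.mpr (neg_le.mp hw1)),
          mul_nonneg (sub_nonneg.mpr (neg_le.mp hp1)) (sub_nonneg.mpr hw2),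
          mul_nonneg (sub_nonneg.mpr hp2) (sub_nonneg.mpr (neg_le.mp hw1)),
          mul_nonneg (sub_nonneg.mpr hy0sq_le) (sq_nonneg ε),
          mul_nonneg hεnn (sub_nonneg.mpr hε1), sq_nonneg y0, sq_nonneg w0]
    have hq : ∀ v : Unit ⊕ Fin n → ℝ,
        v ⬝ᵥ (borderD2 A a b (ts+s) ls).mulVec v
          = v ⬝ᵥ D.mulVec v + s * (v (Sum.inl ()))^2 := by
      intro v
      have h1 : borderD2 A a b (ts+s) ls = borderD A a' (ts+s) := rfl
      rw [h1, borderD_quad, hDa, borderD_quad]; ring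
    exact hgen (fun v => (v (Sum.inl ()))^2) 4 (by norm_num) hbound s
      (borderD2 A a b (ts+s) ls) (borderD2_isHermitian hA a b (ts+s) ls) hq
  -- helper for a' dot products
  have ha'dot : ∀ v : Fin n → ℝ, a' ⬝ᵥ v = a ⬝ᵥ v - ls/2 * (b ⬝ᵥ v) := by
    intro v
    simp only [ha'_def, dotProduct, Finset.mul_sum, ← Finset.sum_sub_distrib]
    apply Finset.sum_congr rfl; intros; ring
  -- λ-direction
  set K : ℝ := 2*(Real.sqrt (b ⬝ᵥ b) + |b ⬝ᵥ z|) with hK_def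
  have hKnn : 0 ≤ K := by positivity
  have hpert_l : ∀ s : ℝ,
      μ + s * (y0 * (b ⬝ᵥ z)) - (K^2/(4*(ν-μ)))*s^2 ≤ lambdaMin (borderD2 A a b ts (ls+s)) := by
    intro s
    have hbound : ∀ (α : ℝ) (w : Unit ⊕ Fin n → ℝ), w ⬝ᵥ y = 0 → α^2 + w ⬝ᵥ w = 1 →
        |(α • y + w) (Sum.inl ()) * (b ⬝ᵥ fun i => (α • y + w) (Sum.inr i))
          - y (Sum.inl ()) * (b ⬝ᵥ fun i => y (Sum.inr i))| ≤ K * Real.sqrt (w ⬝ᵥ w) := by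
      intro α w hwy hsum
      set ε := Real.sqrt (w ⬝ᵥ w) with hε_def
      set w0 := w (Sum.inl ()) with hw0_def
      set wb : Fin n → ℝ := fun i => w (Sum.inr i) with hwb_def
      have hwwnn : 0 ≤ w ⬝ᵥ w := aux_dot_self_nonneg w
      have hε2 : ε^2 = w ⬝ᵥ w := Real.sq_sqrt hwwnn
      have hεnn : 0 ≤ ε := Real.sqrt_nonneg _
      have hα2 : α^2 ≤ 1 := by nlinarith
      have hαabs : |α| ≤ 1 := by
        rw [← Real.sqrt_sq_eq_abs]
        calc Real.sqrt (α^2) ≤ Real.sqrt 1 := Real.sqrt_le_sqrt hα2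
        _ = 1 := Real.sqrt_one
      have hy0abs : |y0| ≤ 1 := by
        rw [← Real.sqrt_sq_eq_abs]
        calc Real.sqrt (y0^2) ≤ Real.sqrt 1 := Real.sqrt_le_sqrt hy0sq_le
        _ = 1 := Real.sqrt_one
      have hw0sq : w0^2 ≤ w ⬝ᵥ w := by
        have h1 := dot_sum_split w w
        have h2 : 0 ≤ wb ⬝ᵥ wb := aux_dot_self_nonneg wb
        nlinarith [h1, h2]
      have hw0abs : |w0| ≤ ε := by
        rw [← Real.sqrt_sq_eq_abs]
        exact Real.sqrt_le_sqrt hw0sq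
      have hε1 : ε ≤ 1 := by
        rw [hε_def]
        calc Real.sqrt (w ⬝ᵥ w) ≤ Real.sqrt 1 := Real.sqrt_le_sqrt (by nlinarith)
        _ = 1 := Real.sqrt_one
      set β := Real.sqrt (b ⬝ᵥ b) with hβ_def
      have hβnn : 0 ≤ β := Real.sqrt_nonneg _
      have hβ2 : β^2 = b ⬝ᵥ b := Real.sq_sqrt (aux_dot_self_nonneg b)
      have hwbwb : wb ⬝ᵥ wb ≤ ε^2 := by
        have h1 := dot_sum_split w w
        rw [hε2]; nlinarith [sq_nonneg w0]
      have hCS : (b ⬝ᵥ wb)^2 ≤ (b ⬝ᵥ b) * (wb ⬝ᵥ wb) := by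
        have h := Finset.sum_mul_sq_le_sq_mul_sq Finset.univ b wb
        simp only [dotProduct]
        calc (∑ i, b i * wb i)^2 ≤ (∑ i, b i ^2) * (∑ i, wb i ^2) := h
        _ = (∑ i, b i * b i) * (∑ i, wb i * wb i) := by
              congr 1 <;> (apply Finset.sum_congr rfl; intros; ring)
      have hbwabs : |b ⬝ᵥ wb| ≤ β * ε := by
        rw [← Real.sqrt_sq_eq_abs]
        calc Real.sqrt ((b ⬝ᵥ wb)^2) ≤ Real.sqrt ((β*ε)^2) := by
              apply Real.sqrt_le_sqrt
              calc (b ⬝ᵥ wb)^2 ≤ (b ⬝ᵥ b) * (wb ⬝ᵥ wb) := hCS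
              _ ≤ β^2 * ε^2 := by rw [hβ2]; exact mul_le_mul_of_nonneg_left hwbwb (aux_dot_self_nonneg b)
              _ = (β*ε)^2 := by ring
        _ = β*ε := Real.sqrt_sq (by positivity)
      set B := |b ⬝ᵥ z| with hB_def
      have hBnn : 0 ≤ B := abs_nonneg _
      have huinl : (α • y + w) (Sum.inl ()) = α * y0 + w0 := by
        simp [hy0_def, hw0_def]
      have hbu : (b ⬝ᵥ fun i => (α • y + w) (Sum.inr i)) = α*(b ⬝ᵥ z) + b ⬝ᵥ wb := by
        simp only [Pi.add_apply, Pi.smul_apply, smul_eq_mul, dotProduct, hz_def,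
          hwb_def, Finset.mul_sum, ← Finset.sum_add_distrib]
        apply Finset.sum_congr rfl; intros; ring
      have hqyid : y (Sum.inl ()) * (b ⬝ᵥ fun i => y (Sum.inr i)) = y0 * (b ⬝ᵥ z) := rfl
      rw [huinl, hbu, hqyid]
      have hd : (α * y0 + w0) * (α*(b ⬝ᵥ z) + b ⬝ᵥ wb) - y0 * (b ⬝ᵥ z)
          = (α*y0)*(b ⬝ᵥ wb) + w0*(α*(b ⬝ᵥ z) + b ⬝ᵥ wb) + (α^2-1)*(y0*(b ⬝ᵥ z)) := by ring
      rw [hd]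
      have e1 : |(α*y0)*(b ⬝ᵥ wb)| ≤ β * ε := by
        rw [abs_mul]
        have h1 : |α*y0| ≤ 1 := by
          rw [abs_mul]; exact mul_le_one₀ hαabs (abs_nonneg _) hy0abs
        calc |α*y0| * |b ⬝ᵥ wb| ≤ 1 * (β*ε) :=
              mul_le_mul h1 hbwabs (abs_nonneg _) zero_le_one
        _ = β*ε := by ring
      have e2 : |w0*(α*(b ⬝ᵥ z) + b ⬝ᵥ wb)| ≤ ε * (B + β) := by
        rw [abs_mul]
        have h1 : |α*(b ⬝ᵥ z) + b ⬝ᵥ wb| ≤ B + β := by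
          calc |α*(b ⬝ᵥ z) + b ⬝ᵥ wb| ≤ |α*(b ⬝ᵥ z)| + |b ⬝ᵥ wb| := abs_add_le _ _
          _ ≤ B + β := by
                have h2 : |α*(b ⬝ᵥ z)| ≤ B := by
                  rw [abs_mul, hB_def]
                  calc |α| * |b ⬝ᵥ z| ≤ 1 * |b ⬝ᵥ z| :=
                        mul_le_mul_of_nonneg_right hαabs (abs_nonneg _)
                  _ = |b ⬝ᵥ z| := one_mul _
                have h3 : |b ⬝ᵥ wb| ≤ β := by
                  calc |b ⬝ᵥ wb| ≤ β*ε := hbwabs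
                  _ ≤ β*1 := mul_le_mul_of_nonneg_left hε1 hβnn
                  _ = β := mul_one β
                linarith
        exact mul_le_mul hw0abs h1 (abs_nonneg _) hεnn
      have e3 : |(α^2-1)*(y0*(b ⬝ᵥ z))| ≤ ε * B := by
        rw [abs_mul]
        have h1 : |α^2-1| = ε^2 := by
          rw [abs_of_nonpos (by linarith [hα2]), hε2]; linarith [hε2]
        have h2 : |y0*(b ⬝ᵥ z)| ≤ B := by
          rw [abs_mul, hB_def]
          calc |y0| * |b ⬝ᵥ z| ≤ 1 * |b ⬝ᵥ z| :=
                mul_le_mul_of_nonneg_right hy0abs (abs_nonneg _)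
          _ = |b ⬝ᵥ z| := one_mul _
        calc |α^2-1| * |y0*(b ⬝ᵥ z)| ≤ ε^2 * B := by
              rw [h1]; exact mul_le_mul_of_nonneg_left h2 (sq_nonneg _)
        _ ≤ ε * B := by
              have hee : ε^2 ≤ ε := by
                rw [sq]
                calc ε * ε ≤ 1 * ε := mul_le_mul_of_nonneg_right hε1 hεnn
                _ = ε := one_mul ε
              exact mul_le_mul_of_nonneg_right hee hBnn
      calc |(α*y0)*(b ⬝ᵥ wb) + w0*(α*(b ⬝ᵥ z) + b ⬝ᵥ wb) + (α^2-1)*(y0*(b ⬝ᵥ z))|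
          ≤ |(α*y0)*(b ⬝ᵥ wb) + w0*(α*(b ⬝ᵥ z) + b ⬝ᵥ wb)| + |(α^2-1)*(y0*(b ⬝ᵥ z))| := abs_add_le _ _
      _ ≤ (|(α*y0)*(b ⬝ᵥ wb)| + |w0*(α*(b ⬝ᵥ z) + b ⬝ᵥ wb)|) + |(α^2-1)*(y0*(b ⬝ᵥ z))| := by
            have := abs_add_le ((α*y0)*(b ⬝ᵥ wb)) (w0*(α*(b ⬝ᵥ z) + b ⬝ᵥ wb)); linarith
      _ ≤ (β*ε + ε*(B+β)) + ε*B := by linarith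
      _ = K * ε := by rw [hK_def, hB_def, hβ_def]; ring
    have hq : ∀ v : Unit ⊕ Fin n → ℝ,
        v ⬝ᵥ (borderD2 A a b ts (ls+s)).mulVec v
          = v ⬝ᵥ D.mulVec v + s * (v (Sum.inl ()) * (b ⬝ᵥ fun i => v (Sum.inr i))) := by
      intro v
      have h1 : borderD2 A a b ts (ls+s) = borderD A (fun j => a j - (ls+s)/2 * b j) ts := rfl
      rw [h1, borderD_quad, hDa, borderD_quad]
      have h2 : ((fun j => a j - (ls+s)/2 * b j) ⬝ᵥ fun i => v (Sum.inr i))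
          = (a' ⬝ᵥ fun i => v (Sum.inr i)) - s/2 * (b ⬝ᵥ fun i => v (Sum.inr i)) := by
        simp only [ha'_def, dotProduct, Finset.mul_sum, ← Finset.sum_sub_distrib]
        apply Finset.sum_congr rfl; intros; ring
      rw [h2]; ring
    exact hgen (fun v => v (Sum.inl ()) * (b ⬝ᵥ fun i => v (Sum.inr i))) K hKnn hbound s
      (borderD2 A a b ts (ls+s)) (borderD2_isHermitian hA a b ts (ls+s)) hq
  -- ktl at the maximizer
  have hμeq : μ = lambdaMin (borderD2 A a b ts ls) := by rw [hμ_def, hD_def]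
  set kstar : ℝ := (Δ+1)*μ - ts - ls*c with hkstar_def
  have hktl_star : ktl A a b c Δ ts ls = kstar := by
    rw [ktl, ← hμeq, hkstar_def]
  -- first order condition in t
  have hteq : (Δ+1)*y0^2 = 1 := by
    set C1 : ℝ := (Δ+1)*(4^2/(4*(ν-μ))) with hC1_def
    have hC1nn : 0 ≤ C1 := by
      apply mul_nonneg (by linarith)
      positivity
    have hkt : ∀ s : ℝ, s*((Δ+1)*y0^2 - 1) ≤ C1*s^2 := by
      intro s
      have h1 := hmax (ts+s) ls hls
      rw [hktl_star, ktl] at h1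
      have h2 := hpert_t s
      have h4 := mul_le_mul_of_nonneg_left h2 (by linarith : (0:ℝ) ≤ Δ+1)
      rw [hC1_def]
      linarith [h1, h4]
    have h5 : (Δ+1)*y0^2 - 1 ≤ 0 := by
      apply nonpos_of_small _ C1 hC1nn 1 one_pos
      intro s hs _
      have h := hkt s
      have h2 : C1*s^2 = s*(C1*s) := by ring
      exact le_of_mul_le_mul_left (h.trans_eq h2) hs
    have h6 : -((Δ+1)*y0^2 - 1) ≤ 0 := by
      apply nonpos_of_small _ C1 hC1nn 1 one_pos
      intro s hs _
      have h := hkt (-s)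
      have h2 : (-s)*((Δ+1)*y0^2 - 1) = s*(-((Δ+1)*y0^2 - 1)) := by ring
      have h3 : C1*(-s)^2 = s*(C1*s) := by ring
      rw [h2, h3] at h
      exact le_of_mul_le_mul_left h hs
    linarith
  -- first order condition in λ
  set φ : ℝ := (Δ+1)*(y0*(b ⬝ᵥ z)) - c with hφ_def
  set C2 : ℝ := (Δ+1)*(K^2/(4*(ν-μ))) with hC2_def
  have hC2nn : 0 ≤ C2 := by
    apply mul_nonneg (by linarith)
    positivity
  have hkl : ∀ s : ℝ, 0 ≤ ls + s → s*φ ≤ C2*s^2 := by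
    intro s hlss
    have h1 := hmax ts (ls+s) hlss
    rw [hktl_star, ktl] at h1
    have h2 := hpert_l s
    have h4 := mul_le_mul_of_nonneg_left h2 (by linarith : (0:ℝ) ≤ Δ+1)
    rw [hφ_def, hC2_def]
    linarith [h1, h4]
  have hφneg : φ ≤ 0 := by
    apply nonpos_of_small _ C2 hC2nn 1 one_pos
    intro s hs _
    have h := hkl s (by linarith)
    have h2 : C2*s^2 = s*(C2*s) := by ring
    exact le_of_mul_le_mul_left (h.trans_eq h2) hs
  have hlsφ : ls * φ = 0 := by
    rcases hls.eq_or_lt with h | h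
    · rw [← h]; ring
    · have h7 : -φ ≤ 0 := by
        apply nonpos_of_small _ C2 hC2nn ls h
        intro s hs hsls
        have hh := hkl (-s) (by linarith)
        have h2 : (-s)*φ = s*(-φ) := by ring
        have h3 : C2*(-s)^2 = s*(C2*s) := by ring
        rw [h2, h3] at hh
        exact le_of_mul_le_mul_left hh hs
      have : φ = 0 := le_antisymm hφneg (by linarith)
      rw [this]; ring
  -- eigen-equation components
  have heig1 : ts * y0 - a' ⬝ᵥ z = μ * y0 := by
    have h1 := congrFun hy (Sum.inl ())
    rw [hDa, borderD_mulVec_inl] at h1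
    simpa [hz_def, hy0_def] using h1
  have heig2 : ∀ i, A.mulVec z i = μ * z i + y0 * a' i := by
    intro i
    have h1 := congrFun hy (Sum.inr i)
    rw [hDa, borderD_mulVec_inr] at h1
    simp only [Pi.smul_apply, smul_eq_mul] at h1
    have h2 : (A.mulVec fun j => y (Sum.inr j)) i = A.mulVec z i := rfl
    rw [h2] at h1
    have h3 : y (Sum.inr i) = z i := rfl
    rw [h3] at h1
    linarith
  have hzz : z ⬝ᵥ z = 1 - y0^2 := by linear_combination hysplit
  have ha'z : a' ⬝ᵥ z = (ts - μ)*y0 := by linarith [heig1]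
  have hzAz : z ⬝ᵥ A.mulVec z = μ*(1-y0^2) + y0*((ts-μ)*y0) := by
    have h1 : z ⬝ᵥ A.mulVec z = μ*(z ⬝ᵥ z) + y0*(a' ⬝ᵥ z) := by
      simp only [dotProduct, Finset.mul_sum, ← Finset.sum_add_distrib]
      apply Finset.sum_congr rfl
      intro i _
      rw [heig2 i]
      have : a' ⬝ᵥ z = z ⬝ᵥ a' := dotProduct_comm a' z
      ring
    rw [h1, hzz, ha'z]
  have haz : a ⬝ᵥ z = (ts-μ)*y0 + ls/2*(b ⬝ᵥ z) := by
    have := ha'dot z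
    rw [ha'z] at this
    linarith
  -- the candidate solution
  have hy0inv : y0⁻¹ = (Δ+1)*y0 := by
    field_simp
    linear_combination -hteq
  have hxs : (fun i => y (Sum.inr i) / y (Sum.inl ())) = y0⁻¹ • z := by
    funext i
    simp [hz_def, hy0_def, div_eq_mul_inv, mul_comm]
  have hxx : (y0⁻¹ • z) ⬝ᵥ (y0⁻¹ • z) = Δ := by
    rw [smul_dotProduct, dotProduct_smul, smul_eq_mul, smul_eq_mul, hzz, hy0inv]
    linear_combination (Δ - (Δ+1)*y0^2) * hteq
  have hbxs : b ⬝ᵥ (y0⁻¹ • z) = (Δ+1)*(y0*(b ⬝ᵥ z)) := by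
    rw [dotProduct_smul, smul_eq_mul, hy0inv]
    ring
  have hbxc : b ⬝ᵥ (y0⁻¹ • z) ≤ c := by
    rw [hbxs]; linarith [hφneg]
  have hobj : objQ A a (y0⁻¹ • z) = kstar := by
    rw [objQ, Matrix.mulVec_smul]
    simp only [smul_dotProduct, dotProduct_smul, smul_eq_mul]
    rw [hzAz, haz, hy0inv, hkstar_def]
    have hls2 := hlsφ
    rw [hφ_def] at hls2
    linear_combination ((Δ+1)*μ - 2*μ + (ts-2*μ)*((Δ+1)*y0^2 - 1)) * hteq - hls2
  -- lower bound via the Lagrangian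
  obtain ⟨-, -, hDray⟩ := lambdaMin_spec hD
  rw [← hμ_def] at hDray
  have hlag : ∀ x : Fin n → ℝ,
      kstar ≤ objQ A a x + (-μ)*(x ⬝ᵥ x - Δ) + ls*(b ⬝ᵥ x - c) := by
    intro x
    set u : Unit ⊕ Fin n → ℝ := Sum.elim (fun _ => 1) x with hu_def
    have h1 := hDray u
    have huu : u ⬝ᵥ u = 1 + x ⬝ᵥ x := by
      rw [dot_sum_split]
      simp [hu_def]
    have huDu : u ⬝ᵥ D.mulVec u = ts - 2*(a' ⬝ᵥ x) + x ⬝ᵥ A.mulVec x := by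
      rw [hDa, borderD_quad]
      simp [hu_def]
    rw [huu, huDu] at h1
    have h2 := ha'dot x
    rw [objQ, hkstar_def]
    linarith [h1, h2]
  have hfeas : ∀ x : Fin n → ℝ, x ⬝ᵥ x ≤ Δ → b ⬝ᵥ x ≤ c → kstar ≤ objQ A a x := by
    intro x h1 h2
    have h3 := hlag x
    have h4 := mul_nonneg (by linarith : (0:ℝ) ≤ -μ) (by linarith : (0:ℝ) ≤ Δ - x ⬝ᵥ x)
    have h5 := mul_nonneg hls (by linarith : (0:ℝ) ≤ c - b ⬝ᵥ x)
    nlinarith [h3, h4, h5]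
  -- assemble
  refine ⟨hy0, ?_, ?_⟩
  · -- strong duality
    have hmemp : kstar ∈ {v : ℝ | ∃ x : Fin n → ℝ, x ⬝ᵥ x ≤ Δ ∧ b ⬝ᵥ x ≤ c ∧ v = objQ A a x} :=
      ⟨y0⁻¹ • z, le_of_eq hxx, hbxc, hobj.symm⟩
    have hlbp : ∀ v ∈ {v : ℝ | ∃ x : Fin n → ℝ, x ⬝ᵥ x ≤ Δ ∧ b ⬝ᵥ x ≤ c ∧ v = objQ A a x},
        kstar ≤ v := by
      rintro v ⟨x, h1, h2, h3⟩
      rw [h3]; exact hfeas x h1 h2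
    have hp : pstar A a b c Δ = kstar :=
      le_antisymm (csInf_le ⟨kstar, hlbp⟩ hmemp) (le_csInf ⟨kstar, hmemp⟩ hlbp)
    have hmemd : kstar ∈ {v : ℝ | ∃ l1 l2 : ℝ, 0 ≤ l1 ∧ 0 ≤ l2 ∧
        ∀ x : Fin n → ℝ, v ≤ lagr A a b c Δ x l1 l2} := by
      refine ⟨-μ, ls, by linarith, hls, fun x => ?_⟩
      rw [lagr, objQ]
      have := hlag x
      rw [objQ] at this
      linarith
    have hubd : ∀ v ∈ {v : ℝ | ∃ l1 l2 : ℝ, 0 ≤ l1 ∧ 0 ≤ l2 ∧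
        ∀ x : Fin n → ℝ, v ≤ lagr A a b c Δ x l1 l2}, v ≤ kstar := by
      rintro v ⟨l1, l2, hl1, hl2, hall⟩
      have h := hall (y0⁻¹ • z)
      rw [lagr, hobj, hxx] at h
      have h2 : l2 * (b ⬝ᵥ (y0⁻¹ • z) - c) ≤ 0 :=
        mul_nonpos_of_nonneg_of_nonpos hl2 (by linarith [hbxc])
      nlinarith [h, h2]

    have hd : dstar A a b c Δ = kstar :=
      le_antisymm (csSup_le ⟨kstar, hmemd⟩ hubd) (le_csSup ⟨kstar, hubd⟩ hmemd)
    rw [pstar] at hp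
    rw [dstar] at hd
    rw [pstar, dstar, hp, hd]
  · -- optimality
    rw [hxs]
    exact ⟨le_of_eq hxx, hbxc, fun x h1 h2 => by rw [hobj]; exact hfeas x h1 h2⟩
end

section
/- (Lemma 2, deflation) Suppose λmin(A) has multiplicity i > 2. Let λ1* := −λmin(A) ≥ 0 and λ2* ≥ 0 be the optimal Lagrange multipliers of eTRS (i.e., (λ1*, λ2*) attains the supremum defining d*), and let u* := (A + λ1*·I)†(a − (λ2*/2)b) with ‖u*‖² < Δ, where † is the Moore–Penrose pseudoinverse. Let v be a unit-norm eigenvector of A for λmin(A) with bᵀv = 0, and let α > 0. Then eTRS has a global optimal solution of the form u* + z with z ∈ Null(A + λ1*·I) if and only if the modified problem, obtained from eTRS by replacing A with A + α·v·vᵀ, has a global optimal solution of the form u* + z with z ∈ Null(A + α·v·vᵀ + λ1*·I). -/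
open Matrix

section Aux

open Matrix

private noncomputable def dotL {n : ℕ} (v : Fin n → ℝ) : (Fin n → ℝ) →ₗ[ℝ] ℝ where
  toFun x := v ⬝ᵥ x
  map_add' x y := dotProduct_add v x y
  map_smul' c x := by simp [dotProduct_smul]

private lemma exists_w {n : ℕ} (M : Matrix (Fin n) (Fin n) ℝ) (v b : Fin n → ℝ)
    (hdim : 2 < Module.finrank ℝ (LinearMap.ker M.mulVecLin)) :
    ∃ w : Fin n → ℝ, M.mulVec w = 0 ∧ v ⬝ᵥ w = 0 ∧ b ⬝ᵥ w = 0 ∧ w ⬝ᵥ w = 1 := by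
  set K := LinearMap.ker M.mulVecLin
  set g : K →ₗ[ℝ] ℝ × ℝ := ((dotL v).comp K.subtype).prod ((dotL b).comp K.subtype)
  have hnotinj : ¬ Function.Injective g := by
    intro hinj
    have := LinearMap.finrank_le_finrank_of_injective hinj
    simp at this
    omega
  rw [← LinearMap.ker_eq_bot] at hnotinj
  obtain ⟨⟨w0, hw0K⟩, hgw0, hw0ne⟩ := Submodule.exists_mem_ne_zero_of_ne_bot hnotinj
  have hker : M.mulVec w0 = 0 := hw0K
  have hv0 : v ⬝ᵥ w0 = 0 := congrArg Prod.fst hgw0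
  have hb0 : b ⬝ᵥ w0 = 0 := congrArg Prod.snd hgw0
  have hw0ne' : w0 ≠ 0 := by
    intro h; apply hw0ne; ext; simp [h]
  have hpos : 0 < w0 ⬝ᵥ w0 := by
    have h2 := (dotProduct_self_eq_zero (v := w0)).not.mpr hw0ne'
    have : 0 ≤ w0 ⬝ᵥ w0 := Finset.sum_nonneg fun i _ => mul_self_nonneg _
    exact lt_of_le_of_ne this (Ne.symm h2)
  refine ⟨(Real.sqrt (w0 ⬝ᵥ w0))⁻¹ • w0, ?_, ?_, ?_, ?_⟩
  · rw [Matrix.mulVec_smul, hker]; simp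
  · simp [dotProduct_smul, hv0]
  · simp [dotProduct_smul, hb0]
  · simp only [smul_dotProduct, dotProduct_smul, smul_eq_mul]
    have hs : Real.sqrt (w0 ⬝ᵥ w0) * Real.sqrt (w0 ⬝ᵥ w0) = w0 ⬝ᵥ w0 :=
      Real.mul_self_sqrt hpos.le
    have hsne : Real.sqrt (w0 ⬝ᵥ w0) ≠ 0 := by positivity
    field_simp
    rw [Real.sq_sqrt hpos.le]

private lemma symdot {n : ℕ} {A : Matrix (Fin n) (Fin n) ℝ} (hA : A.IsHermitian)
    (x y : Fin n → ℝ) : x ⬝ᵥ A.mulVec y = (A.mulVec x) ⬝ᵥ y := by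
  rw [dotProduct_mulVec, ← Matrix.mulVec_transpose]
  congr 1
  have h2 : Aᵀ = A := by
    have := hA.eq; rwa [Matrix.conjTranspose_eq_transpose_of_trivial] at this
  rw [h2]

private lemma vecMulVec_mulVec' {n : ℕ} (v w x : Fin n → ℝ) :
    (Matrix.vecMulVec v w).mulVec x = (w ⬝ᵥ x) • v := by
  ext i
  simp only [Matrix.vecMulVec_apply, Matrix.mulVec, dotProduct, Pi.smul_apply,
    smul_eq_mul, Finset.sum_mul]
  exact Finset.sum_congr rfl fun j _ => by ring

private lemma tilt {n : ℕ} (A : Matrix (Fin n) (Fin n) ℝ) (hA : A.IsHermitian)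
    (a b v w : Fin n → ℝ) (μ : ℝ) (hv : A.mulVec v = μ • v) (hw : A.mulVec w = μ • w)
    (hv1 : v ⬝ᵥ v = 1) (hw1 : w ⬝ᵥ w = 1) (hvw : v ⬝ᵥ w = 0)
    (hbv : b ⬝ᵥ v = 0) (hbw : b ⬝ᵥ w = 0) (hav : a ⬝ᵥ v = 0) (haw : a ⬝ᵥ w = 0)
    (y : Fin n → ℝ) :
    ∃ s t : ℝ, (y + s • v + t • w) ⬝ᵥ (y + s • v + t • w) = y ⬝ᵥ y ∧
      b ⬝ᵥ (y + s • v + t • w) = b ⬝ᵥ y ∧ v ⬝ᵥ (y + s • v + t • w) = 0 ∧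
      objQ A a (y + s • v + t • w) = objQ A a y := by
  set τ := v ⬝ᵥ y with hτ
  set β := w ⬝ᵥ y with hβ
  have hst : Real.sqrt (β ^ 2 + τ ^ 2) ^ 2 = β ^ 2 + τ ^ 2 := Real.sq_sqrt (by positivity)
  set t := -β + Real.sqrt (β ^ 2 + τ ^ 2) with ht
  have hkey : t ^ 2 + 2 * β * t = τ ^ 2 := by
    have h1 : t + β = Real.sqrt (β ^ 2 + τ ^ 2) := by rw [ht]; ring
    have h2 : (t + β) ^ 2 = β ^ 2 + τ ^ 2 := by rw [h1]; exact hst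
    nlinarith [h2]
  have hyv : y ⬝ᵥ v = τ := dotProduct_comm y v
  have hyw : y ⬝ᵥ w = β := dotProduct_comm y w
  have hwv : w ⬝ᵥ v = 0 := by rw [dotProduct_comm]; exact hvw
  have hvAy : v ⬝ᵥ A.mulVec y = μ * τ := by
    rw [symdot hA, hv]; simp [smul_dotProduct, smul_eq_mul, hτ]
  have hwAy : w ⬝ᵥ A.mulVec y = μ * β := by
    rw [symdot hA, hw]; simp [smul_dotProduct, smul_eq_mul, hβ]
  refine ⟨-τ, t, ?_, ?_, ?_, ?_⟩
  · simp only [dotProduct_add, add_dotProduct, dotProduct_smul,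
      smul_dotProduct, smul_eq_mul, hv1, hw1, hvw, hwv, hyv, hyw, ← hτ, ← hβ]
    ring_nf
    linear_combination hkey
  · simp only [dotProduct_add, dotProduct_smul, smul_eq_mul, hbv, hbw]
    ring
  · simp only [dotProduct_add, dotProduct_smul, smul_eq_mul, hv1, hvw, ← hτ]
    ring
  · simp only [objQ, Matrix.mulVec_add, Matrix.mulVec_smul, hv, hw,
      dotProduct_add, add_dotProduct, dotProduct_smul,
      smul_dotProduct, smul_eq_mul, hv1, hw1, hvw, hwv, hyv, hyw, hav, haw,
      hvAy, hwAy, ← hτ, ← hβ]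
    ring_nf
    linear_combination μ * hkey

end Aux

/-- Lemma 2 (deflation). Here u is the Moore–Penrose solution
u* = (A + λ1*·I)†(a − (λ2*/2)b), characterized as the solution of
(A + λ1*·I)u = a − (λ2*/2)b orthogonal to Null(A + λ1*·I). -/
theorem stmt14 {n : ℕ} (hn : 1 ≤ n) (A : Matrix (Fin n) (Fin n) ℝ) (hA : A.IsHermitian)
    (hnpd : ¬ A.PosDef) (a b : Fin n → ℝ) (c Δ : ℝ) (hΔ : 0 < Δ)
    (hslater : ∃ x : Fin n → ℝ, x ⬝ᵥ x < Δ ∧ b ⬝ᵥ x < c)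
    (hmult : 2 < eigMult A) (l2 : ℝ) (hl1 : 0 ≤ -lambdaMin A) (hl2 : 0 ≤ l2)
    (hattain : ∀ x : Fin n → ℝ, dstar A a b c Δ ≤ lagr A a b c Δ x (-lambdaMin A) l2)
    (u : Fin n → ℝ)
    (hu : (A + (-lambdaMin A) • (1 : Matrix (Fin n) (Fin n) ℝ)).mulVec u = a - (l2 / 2) • b)
    (huorth : ∀ z : Fin n → ℝ,
      (A + (-lambdaMin A) • (1 : Matrix (Fin n) (Fin n) ℝ)).mulVec z = 0 → u ⬝ᵥ z = 0)
    (hunorm : u ⬝ᵥ u < Δ)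
    (v : Fin n → ℝ) (hv : A.mulVec v = lambdaMin A • v) (hv1 : v ⬝ᵥ v = 1)
    (hvb : b ⬝ᵥ v = 0) (α : ℝ) (hα : 0 < α) :
    (∃ z : Fin n → ℝ,
        (A + (-lambdaMin A) • (1 : Matrix (Fin n) (Fin n) ℝ)).mulVec z = 0 ∧
        isOptimal A a b c Δ (u + z)) ↔
    (∃ z : Fin n → ℝ,
        (A + α • Matrix.vecMulVec v v +
          (-lambdaMin A) • (1 : Matrix (Fin n) (Fin n) ℝ)).mulVec z = 0 ∧
        isOptimal (A + α • Matrix.vecMulVec v v) a b c Δ (u + z)) := by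
  
  classical
  set L := lambdaMin A with hL
  set M : Matrix (Fin n) (Fin n) ℝ := A + (-L) • (1 : Matrix (Fin n) (Fin n) ℝ) with hM
  have hMmul : ∀ x : Fin n → ℝ, M.mulVec x = A.mulVec x + (-L) • x := by
    intro x
    rw [hM, Matrix.add_mulVec, Matrix.smul_mulVec, Matrix.one_mulVec]
  have hMv : M.mulVec v = 0 := by
    rw [hMmul, hv]
    ext i; simp
  have hvu : u ⬝ᵥ v = 0 := huorth v hMv
  have hvu' : v ⬝ᵥ u = 0 := by rw [dotProduct_comm]; exact hvu
  -- dimension of the kernel of M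
  have hdim : 2 < Module.finrank ℝ (LinearMap.ker M.mulVecLin) := by
    have hMe : M = A - L • (1 : Matrix (Fin n) (Fin n) ℝ) := by
      rw [hM, sub_eq_add_neg, neg_smul]
    rw [hMe]
    exact hmult
  obtain ⟨w, hMw, hvw, hbw, hw1⟩ := exists_w M v b hdim
  have hwu : u ⬝ᵥ w = 0 := huorth w hMw
  have hAw : A.mulVec w = L • w := by
    have h := hMw
    rw [hMmul] at h
    have h2 := eq_neg_of_add_eq_zero_left h
    rw [h2]; ext i; simp
  -- a ⬝ᵥ v = 0 and a ⬝ᵥ w = 0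
  have hadot : ∀ q : Fin n → ℝ, M.mulVec q = 0 → b ⬝ᵥ q = 0 → a ⬝ᵥ q = 0 := by
    intro q hMq hbq
    have h1 : q ⬝ᵥ (M.mulVec u) = q ⬝ᵥ (a - (l2 / 2) • b) := by rw [hu]
    have hMherm : M.IsHermitian := by
      show Mᴴ = M
      rw [hM, Matrix.conjTranspose_add, Matrix.conjTranspose_smul,
        Matrix.conjTranspose_one, hA.eq]
      simp
    rw [symdot hMherm, hMq] at h1
    simp only [zero_dotProduct, dotProduct_sub, dotProduct_smul,
      smul_eq_mul] at h1
    have hqb : q ⬝ᵥ b = 0 := by rw [dotProduct_comm]; exact hbq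
    have hqa : q ⬝ᵥ a = 0 := by rw [hqb] at h1; linarith
    rw [dotProduct_comm]; exact hqa
  have hbv' : b ⬝ᵥ v = 0 := hvb
  have hav : a ⬝ᵥ v = 0 := hadot v hMv hbv'
  have haw : a ⬝ᵥ w = 0 := hadot w hMw hbw
  -- objective of the deflated matrix
  have hobj' : ∀ x : Fin n → ℝ,
      objQ (A + α • Matrix.vecMulVec v v) a x = objQ A a x + α * (v ⬝ᵥ x) ^ 2 := by
    intro x
    simp only [objQ, Matrix.add_mulVec, Matrix.smul_mulVec, vecMulVec_mulVec',
      dotProduct_add, dotProduct_smul, smul_eq_mul]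
    have : x ⬝ᵥ v = v ⬝ᵥ x := dotProduct_comm x v
    rw [this]
    ring
  -- mulVec of the deflated shifted matrix
  have hM'm : ∀ z : Fin n → ℝ,
      (A + α • Matrix.vecMulVec v v + (-L) • (1 : Matrix (Fin n) (Fin n) ℝ)).mulVec z
        = M.mulVec z + (α * (v ⬝ᵥ z)) • v := by
    intro z
    have he : A + α • Matrix.vecMulVec v v + (-L) • (1 : Matrix (Fin n) (Fin n) ℝ)
        = M + α • Matrix.vecMulVec v v := by
      rw [hM]; abel
    rw [he, Matrix.add_mulVec, Matrix.smul_mulVec, vecMulVec_mulVec', smul_smul]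
  constructor
  · rintro ⟨z, hz, hf1, hf2, hopt⟩
    obtain ⟨s, t, hnorm, hb, hv0, hoeq⟩ :=
      tilt A hA a b v w L hv hAw hv1 hw1 hvw hbv' hbw hav haw (u + z)
    have hre : u + (z + s • v + t • w) = u + z + s • v + t • w := by abel
    have hvz2 : v ⬝ᵥ (z + s • v + t • w) = 0 := by
      have h2 : v ⬝ᵥ (u + z + s • v + t • w) = v ⬝ᵥ u + v ⬝ᵥ (z + s • v + t • w) := by
        rw [← hre, dotProduct_add]
      rw [hv0, hvu'] at h2
      linarith
    refine ⟨z + s • v + t • w, ?_, ?_, ?_, ?_⟩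
    · rw [hM'm, hvz2]
      have : M.mulVec (z + s • v + t • w) = 0 := by
        rw [Matrix.mulVec_add, Matrix.mulVec_add, Matrix.mulVec_smul, Matrix.mulVec_smul,
          hz, hMv, hMw]
        ext i; simp
      rw [this]
      ext i; simp
    · rw [hre, hnorm]; exact hf1
    · rw [hre, hb]; exact hf2
    · intro y hy1 hy2
      have h1 : objQ (A + α • Matrix.vecMulVec v v) a (u + (z + s • v + t • w))
          = objQ A a (u + z) := by
        rw [hobj', hre, hv0, hoeq]; ring
      have h2 : objQ A a (u + z) ≤ objQ A a y := hopt y hy1 hy2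
      have h3 : objQ A a y ≤ objQ (A + α • Matrix.vecMulVec v v) a y := by
        rw [hobj']
        nlinarith [sq_nonneg (v ⬝ᵥ y), hα.le]
      rw [h1]; linarith
  · rintro ⟨z, hz, hf1, hf2, hopt⟩
    rw [hM'm] at hz
    have hvz : v ⬝ᵥ z = 0 := by
      have h1 : v ⬝ᵥ (M.mulVec z + (α * (v ⬝ᵥ z)) • v) = 0 := by rw [hz]; simp
      have h2 : v ⬝ᵥ M.mulVec z = 0 := by
        have hMherm : M.IsHermitian := by
          show Mᴴ = M
          rw [hM, Matrix.conjTranspose_add, Matrix.conjTranspose_smul,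
            Matrix.conjTranspose_one, hA.eq]
          simp
        rw [symdot hMherm, hMv]
        simp
      rw [dotProduct_add, h2, dotProduct_smul, smul_eq_mul, hv1] at h1
      have h3 : α * (v ⬝ᵥ z) = 0 := by linarith
      rcases mul_eq_zero.mp h3 with h4 | h4
      · exact absurd h4 hα.ne'
      · exact h4
    have hMz : M.mulVec z = 0 := by
      rw [hvz] at hz
      simpa using hz
    refine ⟨z, hMz, hf1, hf2, ?_⟩
    intro y hy1 hy2
    obtain ⟨s, t, hnorm, hb, hv0, hoeq⟩ :=
      tilt A hA a b v w L hv hAw hv1 hw1 hvw hbv' hbw hav haw y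
    have hvuz : v ⬝ᵥ (u + z) = 0 := by
      rw [dotProduct_add, hvu', hvz]; ring
    have h1 : objQ A a (u + z) = objQ (A + α • Matrix.vecMulVec v v) a (u + z) := by
      rw [hobj', hvuz]; ring
    have h2 : objQ (A + α • Matrix.vecMulVec v v) a (u + z)
        ≤ objQ (A + α • Matrix.vecMulVec v v) a (y + s • v + t • w) := by
      apply hopt
      · rw [hnorm]; exact hy1
      · rw [hb]; exact hy2
    have h3 : objQ (A + α • Matrix.vecMulVec v v) a (y + s • v + t • w) = objQ A a y := by
      rw [hobj', hv0, hoeq]; ring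
    linarith
end

section
/- (Proposition 2, Appendix) Suppose λmin(A) has multiplicity i > 2, and let λ1* := −λmin(A) ≥ 0 and λ2* ≥ 0 be optimal Lagrange multipliers of eTRS, i.e., (λ1*, λ2*) attains the supremum defining d*. Let v be a unit-norm eigenvector of A for λmin(A) with vᵀb = 0, and let α > 0. Then (λ1*, λ2*) also attains the supremum defining the Lagrangian dual value of the modified problem obtained from eTRS by replacing A with A + α·v·vᵀ. -/
open Matrix

section Aux

open Matrix

private lemma aux_mulVec_vvT {n : ℕ} (v w x : Fin n → ℝ) (α : ℝ) :
    (α • Matrix.vecMulVec v w).mulVec x = (α * (w ⬝ᵥ x)) • v := by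
  ext i
  simp [Matrix.vecMulVec, Matrix.mulVec, dotProduct, Finset.mul_sum]
  ring_nf
  rw [Finset.mul_sum]
  congr 1; ext j; ring

private lemma aux_dot_symm {n : ℕ} (A : Matrix (Fin n) (Fin n) ℝ) (hA : Aᵀ = A)
    (v x : Fin n → ℝ) : v ⬝ᵥ A.mulVec x = (A.mulVec v) ⬝ᵥ x := by
  rw [Matrix.dotProduct_mulVec]
  nth_rewrite 2 [← hA]
  rw [Matrix.mulVec_transpose]

private lemma aux_lagr_pen {n : ℕ} (A : Matrix (Fin n) (Fin n) ℝ) (a b v : Fin n → ℝ)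
    (c Δ l1 l2 α : ℝ) (x : Fin n → ℝ) :
    lagr (A + α • Matrix.vecMulVec v v) a b c Δ x l1 l2
      = lagr A a b c Δ x l1 l2 + α * (v ⬝ᵥ x)^2 := by
  unfold lagr objQ
  rw [Matrix.add_mulVec, dotProduct_add, aux_mulVec_vvT, dotProduct_smul]
  rw [dotProduct_comm x v]
  simp only [smul_eq_mul]
  ring

private lemma aux_lagr_split {n : ℕ} (A : Matrix (Fin n) (Fin n) ℝ) (hA : Aᵀ = A)
    (a b v : Fin n → ℝ) (c Δ l1 l2 lam : ℝ) (hv : A.mulVec v = lam • v)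
    (hv1 : v ⬝ᵥ v = 1) (hvb : v ⬝ᵥ b = 0) (hav : a ⬝ᵥ v = 0) (x : Fin n → ℝ) :
    lagr A a b c Δ x l1 l2
      = lagr A a b c Δ (x - (v ⬝ᵥ x) • v) l1 l2 + (lam + l1) * (v ⬝ᵥ x)^2 := by
  have e1 : v ⬝ᵥ A.mulVec x = lam * (v ⬝ᵥ x) := by
    rw [aux_dot_symm A hA, hv, smul_dotProduct]; rfl
  have e2 : x ⬝ᵥ v = v ⬝ᵥ x := dotProduct_comm x v
  have e3 : b ⬝ᵥ v = 0 := by rw [dotProduct_comm]; exact hvb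
  unfold lagr objQ
  rw [Matrix.mulVec_sub, Matrix.mulVec_smul, hv]
  simp only [sub_dotProduct, dotProduct_sub, dotProduct_smul, smul_dotProduct, smul_eq_mul,
    e1, e2, e3, hv1, hav]
  ring

private lemma aux_quad_neg {p e f w : ℝ} (hp : p < 0)
    (h : ∀ s : ℝ, w ≤ p * s^2 + e * s + f) : False := by
  set B : ℝ := |e| + |f| + |w| + 1 with hB
  have hBpos : 0 < B := by positivity
  have hnp : (-p) ≠ 0 := ne_of_gt (by linarith)
  obtain ⟨s, hs1, hps⟩ : ∃ s : ℝ, 1 ≤ s ∧ p * s ≤ -B := by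
    refine ⟨B / (-p) + 1, ?_, ?_⟩
    · have : 0 ≤ B / (-p) := by apply div_nonneg <;> linarith
      linarith
    · have key : B / (-p) * (-p) = B := div_mul_cancel₀ B hnp
      nlinarith
  have hq : p * s + e ≤ -(|f| + |w| + 1) := by
    have := le_abs_self e; linarith
  have hq2 : s * (p * s + e) ≤ p * s + e := by
    nlinarith [mul_nonneg (by linarith : (0:ℝ) ≤ s - 1)
      (by linarith [abs_nonneg f, abs_nonneg w] : 0 ≤ -(p*s+e))]
  have hr : p * s^2 + e * s + f = s * (p * s + e) + f := by ring
  have h2 := h s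
  have := le_abs_self f
  have := neg_abs_le w
  linarith

private noncomputable def auxDotL {n : ℕ} (v : Fin n → ℝ) : (Fin n → ℝ) →ₗ[ℝ] ℝ where
  toFun x := v ⬝ᵥ x
  map_add' x y := dotProduct_add v x y
  map_smul' r x := by simp

private lemma aux_exists_orth {n : ℕ} (K : Submodule ℝ (Fin n → ℝ)) (v : Fin n → ℝ)
    (hK : 2 < Module.finrank ℝ K) : ∃ u : Fin n → ℝ, u ∈ K ∧ u ≠ 0 ∧ v ⬝ᵥ u = 0 := by
  set g := (auxDotL v).domRestrict K with hg
  have hne : LinearMap.ker g ≠ ⊥ := by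
    intro hbot
    have hinj : Function.Injective g := LinearMap.ker_eq_bot.mp hbot
    have := LinearMap.finrank_le_finrank_of_injective hinj
    simp [Module.finrank_self] at this
    omega
  obtain ⟨u, hu, hune⟩ := Submodule.ne_bot_iff _ |>.mp hne
  exact ⟨(u : Fin n → ℝ), u.2, by simpa using hune, hu⟩

private lemma aux_dot_pos {n : ℕ} (u : Fin n → ℝ) (hu : u ≠ 0) : 0 < u ⬝ᵥ u := by
  have h0 : 0 ≤ u ⬝ᵥ u := Finset.sum_nonneg fun i _ => mul_self_nonneg (u i)
  have h1 : u ⬝ᵥ u ≠ 0 := fun h => hu (dotProduct_self_eq_zero.mp h)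
  exact h0.lt_of_ne (Ne.symm h1)

end Aux

/-- Proposition 2 (Appendix). -/
theorem stmt16 {n : ℕ} (hn : 1 ≤ n) (A : Matrix (Fin n) (Fin n) ℝ) (hA : A.IsHermitian)
    (hnpd : ¬ A.PosDef) (a b : Fin n → ℝ) (c Δ : ℝ) (hΔ : 0 < Δ)
    (hslater : ∃ x : Fin n → ℝ, x ⬝ᵥ x < Δ ∧ b ⬝ᵥ x < c)
    (hmult : 2 < eigMult A) (l2 : ℝ) (hl1 : 0 ≤ -lambdaMin A) (hl2 : 0 ≤ l2)
    (hattain : ∀ x : Fin n → ℝ, dstar A a b c Δ ≤ lagr A a b c Δ x (-lambdaMin A) l2)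
    (v : Fin n → ℝ) (hv : A.mulVec v = lambdaMin A • v) (hv1 : v ⬝ᵥ v = 1)
    (hvb : v ⬝ᵥ b = 0) (α : ℝ) (hα : 0 < α) :
    ∀ x : Fin n → ℝ,
      dstar (A + α • Matrix.vecMulVec v v) a b c Δ ≤
        lagr (A + α • Matrix.vecMulVec v v) a b c Δ x (-lambdaMin A) l2 := by
  intro x
  set lam := lambdaMin A with hlam
  have hAT : Aᵀ = A := (by simpa using hA : A.IsSymm)
  -- Step 1: a ⬝ᵥ v = 0
  have hav : a ⬝ᵥ v = 0 := by
    by_contra hne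
    have hval : ∀ t : ℝ, lagr A a b c Δ (t • v) (-lam) l2
        = -2 * (a ⬝ᵥ v) * t + (lam * Δ - l2 * c) := by
      intro t
      have e3 : b ⬝ᵥ v = 0 := by rw [dotProduct_comm]; exact hvb
      unfold lagr objQ
      rw [Matrix.mulVec_smul, hv]
      simp only [smul_dotProduct, dotProduct_smul, smul_eq_mul, hv1, e3]
      ring
    set D := dstar A a b c Δ with hD
    set C := lam * Δ - l2 * c with hC
    set d := a ⬝ᵥ v with hd
    have h1 := hattain (((C - D + 1) / (2 * d)) • v)
    rw [hval] at h1
    have h2d : (2 : ℝ) * d ≠ 0 := by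
      intro h; apply hne; rcases mul_eq_zero.mp h with h | h
      · norm_num at h
      · exact h
    have hkey : -2 * d * ((C - D + 1) / (2 * d)) = -(C - D + 1) := by
      field_simp
    rw [hkey] at h1
    linarith
  -- Step 2: a vector u in the λmin-eigenspace, orthogonal to v
  have hK : 2 < Module.finrank ℝ
      (LinearMap.ker (A - lam • (1 : Matrix (Fin n) (Fin n) ℝ)).mulVecLin) := hmult
  obtain ⟨u, huK, hune, hvu⟩ := aux_exists_orth _ v hK
  have hu : A.mulVec u = lam • u := by
    have h := (LinearMap.mem_ker).mp huK
    rw [Matrix.mulVecLin_apply, Matrix.sub_mulVec, Matrix.smul_mulVec,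
      Matrix.one_mulVec, sub_eq_zero] at h
    exact h
  have huu : 0 < u ⬝ᵥ u := aux_dot_pos u hune
  -- Notation for the perturbed matrix
  set A' := A + α • Matrix.vecMulVec v v with hA'
  -- Step 3: dstar A ∈ both dual sets
  have hmemS' : dstar A a b c Δ ∈
      {w : ℝ | ∃ l1 l2 : ℝ, 0 ≤ l1 ∧ 0 ≤ l2 ∧ ∀ y : Fin n → ℝ, w ≤ lagr A' a b c Δ y l1 l2} := by
    refine ⟨-lam, l2, hl1, hl2, fun y => ?_⟩
    rw [hA', aux_lagr_pen]
    have := hattain y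
    nlinarith [sq_nonneg (v ⬝ᵥ y), mul_nonneg hα.le (sq_nonneg (v ⬝ᵥ y))]
  -- Step 4: the set defining dstar A is bounded above
  obtain ⟨xh, hxh1, hxh2⟩ := hslater
  have hbdd : BddAbove
      {w : ℝ | ∃ l1 l2 : ℝ, 0 ≤ l1 ∧ 0 ≤ l2 ∧ ∀ y : Fin n → ℝ, w ≤ lagr A a b c Δ y l1 l2} := by
    refine ⟨objQ A a xh, ?_⟩
    rintro w ⟨l1, l2', p1, p2, hw⟩
    have h := hw xh
    unfold lagr at h
    nlinarith [mul_nonneg p1 (by linarith : (0:ℝ) ≤ Δ - xh ⬝ᵥ xh),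
      mul_nonneg p2 (by linarith : (0:ℝ) ≤ c - b ⬝ᵥ xh)]
  -- Step 5: every element of the perturbed dual set is ≤ dstar A
  have hupper : ∀ w ∈
      {w : ℝ | ∃ l1 l2 : ℝ, 0 ≤ l1 ∧ 0 ≤ l2 ∧ ∀ y : Fin n → ℝ, w ≤ lagr A' a b c Δ y l1 l2},
      w ≤ dstar A a b c Δ := by
    rintro w ⟨l1, l2', p1, p2, hw⟩
    rcases lt_or_ge (lam + l1) 0 with hneg | hpos
    · -- Lagrangian unbounded below along u : contradiction
      exfalso
      refine aux_quad_neg (w := w) (p := (lam + l1) * (u ⬝ᵥ u))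
        (e := -2 * (a ⬝ᵥ u) + l2' * (b ⬝ᵥ u)) (f := -l1 * Δ - l2' * c)
        (mul_neg_of_neg_of_pos hneg huu) (fun s => ?_)
      have h := hw (s • u)
      have hval : lagr A' a b c Δ (s • u) l1 l2'
          = (lam + l1) * (u ⬝ᵥ u) * s^2 + (-2 * (a ⬝ᵥ u) + l2' * (b ⬝ᵥ u)) * s
            + (-l1 * Δ - l2' * c) := by
        have hAu : A'.mulVec u = lam • u := by
          rw [hA', Matrix.add_mulVec, aux_mulVec_vvT, hvu, hu]
          simp
        unfold lagr objQ
        rw [Matrix.mulVec_smul, hAu]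
        simp only [smul_dotProduct, dotProduct_smul, smul_eq_mul]
        ring
      rw [hval] at h
      exact h
    · -- same multipliers work for the original problem
      have hmem : w ∈
          {w : ℝ | ∃ l1 l2 : ℝ, 0 ≤ l1 ∧ 0 ≤ l2 ∧
            ∀ y : Fin n → ℝ, w ≤ lagr A a b c Δ y l1 l2} := by
        refine ⟨l1, l2', p1, p2, fun y => ?_⟩
        have h := hw (y - (v ⬝ᵥ y) • v)
        rw [hA', aux_lagr_pen] at h
        have hvy : v ⬝ᵥ (y - (v ⬝ᵥ y) • v) = 0 := by
          simp [dotProduct_sub, dotProduct_smul, hv1]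
        rw [hvy] at h
        have hsplit := aux_lagr_split A hAT a b v c Δ l1 l2' lam hv hv1 hvb hav y
        nlinarith [mul_nonneg hpos (sq_nonneg (v ⬝ᵥ y))]
      exact le_csSup hbdd hmem
  -- Step 6: conclude
  have hS'ne : {w : ℝ | ∃ l1 l2 : ℝ, 0 ≤ l1 ∧ 0 ≤ l2 ∧
      ∀ y : Fin n → ℝ, w ≤ lagr A' a b c Δ y l1 l2}.Nonempty := ⟨_, hmemS'⟩
  have hdd : dstar A' a b c Δ ≤ dstar A a b c Δ := csSup_le hS'ne hupper
  have h3 : lagr A a b c Δ x (-lam) l2 ≤ lagr A' a b c Δ x (-lam) l2 := by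
    rw [hA', aux_lagr_pen]
    nlinarith [mul_nonneg hα.le (sq_nonneg (v ⬝ᵥ x))]
  calc dstar A' a b c Δ ≤ dstar A a b c Δ := hdd
    _ ≤ lagr A a b c Δ x (-lam) l2 := hattain x
    _ ≤ lagr A' a b c Δ x (-lam) l2 := h3
end
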